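/- Let A ⊆ {0,1}^n with |A| ≥ 2^{n-c}, c ≥ 1, α ∈ (0,1/4], and suppose c ≤ γε√(n/α) for a sufficiently small universal constant γ > 0 and ε ∈ (0,1]. Then the tail sum satisfies (2^{2n}/|A|²) ∑_{even k=4c}^{2αn} (C(αn,k/2)/C(n,k)) ∑_{v:|v|=k} f̂(v)² ≤ 2^c · C(αn,2c)/C(n,4c) ≤ (8√2 e α c / n)^{2c} ≤ ε²/2, where f is the characteristic function of A. -/

import Mathlib

set_option maxHeartbeats 1000000

open Finset

open scoped Classical

noncomputable def boolFourier {n : ℕ} (f : (Fin n → ZMod 2) → ℝ) (s : Fin n → ZMod 2) : ℝ :=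
  ((2 : ℝ) ^ n)⁻¹ * ∑ y : Fin n → ZMod 2, f y * (-1 : ℝ) ^ (∑ i, y i * s i : ZMod 2).val

lemma neg_one_val_add (a b : ZMod 2) :
    (-1 : ℝ) ^ ((a + b).val) = (-1 : ℝ) ^ a.val * (-1 : ℝ) ^ b.val := by
  rw [ZMod.val_add, ← neg_one_pow_eq_pow_mod_two, pow_add]

lemma orth {n : ℕ} (z : Fin n → ZMod 2) :
    ∑ v : Fin n → ZMod 2, (-1 : ℝ) ^ (∑ i, z i * v i : ZMod 2).val
      = if z = 0 then (2 : ℝ) ^ n else 0 := by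
  split_ifs with hz
  · subst hz
    have : ∀ v : Fin n → ZMod 2, (∑ i, (0 : Fin n → ZMod 2) i * v i : ZMod 2) = 0 := by
      intro v; simp
    simp only [this]
    simp [Finset.card_univ]
  · obtain ⟨i0, hi0⟩ := Function.ne_iff.mp hz
    have hz1 : z i0 = 1 := by
      have : ∀ a : ZMod 2, a ≠ 0 → a = 1 := by decide
      exact this _ hi0
    apply Finset.sum_involution (fun v _ => Function.update v i0 (v i0 + 1))
    · intro v _
      have key : (∑ i, z i * (Function.update v i0 (v i0 + 1)) i : ZMod 2)
          = (∑ i, z i * v i) + 1 := by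
        have h1 : ∀ i, z i * (Function.update v i0 (v i0 + 1)) i
            = z i * v i + if i = i0 then 1 else 0 := by
          intro i
          rcases eq_or_ne i i0 with h | h
          · subst h; simp [Function.update_self, hz1]
          · simp [Function.update_of_ne h, h]
        rw [Finset.sum_congr rfl fun i _ => h1 i, Finset.sum_add_distrib]
        simp
      rw [key, neg_one_val_add]
      norm_num [show ((1:ZMod 2)).val = 1 from rfl]
    · intro v _ _
      intro h
      have := congrFun h i0
      simp [Function.update_self] at this
    · intro v _
      funext i
      rcases eq_or_ne i i0 with h | h
      · subst h; simp [Function.update_self]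
        ring_nf
        simp [CharTwo.two_eq_zero]
      · simp [Function.update_of_ne h]
    · intro v _; exact Finset.mem_univ _

lemma parseval {n : ℕ} (f : (Fin n → ZMod 2) → ℝ) :
    ∑ v : Fin n → ZMod 2, (boolFourier f v) ^ 2
      = ((2 : ℝ) ^ n)⁻¹ * ∑ x : Fin n → ZMod 2, (f x) ^ 2 := by
  have h2n : ((2:ℝ) ^ n) ≠ 0 := by positivity
  have key : ∀ v : Fin n → ZMod 2,
      (∑ y : Fin n → ZMod 2, f y * (-1 : ℝ) ^ (∑ i, y i * v i : ZMod 2).val) ^ 2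
        = ∑ x : Fin n → ZMod 2, ∑ y : Fin n → ZMod 2,
            f x * f y * (-1 : ℝ) ^ (∑ i, (x + y) i * v i : ZMod 2).val := by
    intro v
    rw [sq, Finset.sum_mul_sum]
    refine Finset.sum_congr rfl fun x _ => Finset.sum_congr rfl fun y _ => ?_
    have : (∑ i, (x + y) i * v i : ZMod 2) = (∑ i, x i * v i) + (∑ i, y i * v i) := by
      rw [← Finset.sum_add_distrib]
      exact Finset.sum_congr rfl fun i _ => by simp [add_mul]
    rw [this, neg_one_val_add]
    ring
  have main : ∑ v : Fin n → ZMod 2,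
      (∑ y : Fin n → ZMod 2, f y * (-1 : ℝ) ^ (∑ i, y i * v i : ZMod 2).val) ^ 2
        = (2:ℝ) ^ n * ∑ x : Fin n → ZMod 2, (f x) ^ 2 := by
    simp_rw [key]
    rw [Finset.sum_comm]
    have : ∀ x : Fin n → ZMod 2,
        (∑ v : Fin n → ZMod 2, ∑ y : Fin n → ZMod 2,
            f x * f y * (-1 : ℝ) ^ (∑ i, (x + y) i * v i : ZMod 2).val)
          = (2:ℝ)^n * (f x)^2 := by
      intro x
      rw [Finset.sum_comm]
      have hy : ∀ y : Fin n → ZMod 2,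
          (∑ v : Fin n → ZMod 2, f x * f y * (-1 : ℝ) ^ (∑ i, (x + y) i * v i : ZMod 2).val)
            = f x * f y * (if x + y = 0 then (2:ℝ)^n else 0) := by
        intro y
        rw [← Finset.mul_sum, orth]
      rw [Finset.sum_congr rfl fun y _ => hy y]
      have hxy : ∀ y : Fin n → ZMod 2, (x + y = 0) ↔ (y = x) := by
        intro y
        constructor
        · intro h; funext i
          have := congrFun h i
          have h2 : ∀ a b : ZMod 2, a + b = 0 → b = a := by decide
          exact h2 _ _ this
        · intro h; subst h; funext i; simp [CharTwo.add_self_eq_zero]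
      simp_rw [mul_ite, mul_zero]
      rw [Finset.sum_congr rfl fun y _ => if_congr (hxy y) rfl rfl]
      rw [Finset.sum_ite_eq' Finset.univ x (fun y => f x * f y * (2:ℝ)^n)]
      rw [if_pos (Finset.mem_univ x)]
      ring
    rw [Finset.sum_congr rfl fun x _ => this x, ← Finset.mul_sum]
  unfold boolFourier
  simp_rw [mul_pow]
  rw [← Finset.mul_sum, main]
  field_simp

lemma mono_step {n m j : ℕ} (hj : j < m) (hmn : 4 * m ≤ n) :
    Nat.choose m (j+1) * Nat.choose n (2*j) ≤ Nat.choose m j * Nat.choose n (2*j+2) := by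
  have h1 : Nat.choose m (j+1) * (j+1) = Nat.choose m j * (m - j) := Nat.choose_succ_right_eq m j
  have h2 : Nat.choose n (2*j+1) * (2*j+1) = Nat.choose n (2*j) * (n - 2*j) :=
    Nat.choose_succ_right_eq n (2*j)
  have h3 : Nat.choose n (2*j+2) * (2*j+2) = Nat.choose n (2*j+1) * (n - (2*j+1)) :=
    Nat.choose_succ_right_eq n (2*j+1)
  -- key numeric inequality
  obtain ⟨e, he⟩ : ∃ e, m = j + e + 1 := ⟨m - j - 1, by omega⟩
  obtain ⟨D, hD⟩ : ∃ D, n = 2*j + D + 1 := ⟨n - 2*j - 1, by omega⟩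
  have hDe : 2*j + 4*e + 3 ≤ n := by omega
  have hkey : 2 * (m - j) * (2*j+1) ≤ (n - (2*j+1)) * (n - 2*j) := by
    have e1 : m - j = e + 1 := by omega
    have e2 : n - (2*j+1) = D := by omega
    have e3 : n - 2*j = D + 1 := by omega
    rw [e1, e2, e3]
    have hDge : 2*j + 4*e + 2 ≤ D := by omega
    nlinarith
  -- multiply everything out
  have hpos : 0 < (j+1) * ((2*j+1) * (2*j+2)) := by positivity
  refine Nat.le_of_mul_le_mul_right ?_ hpos
  calc Nat.choose m (j+1) * Nat.choose n (2*j) * ((j+1) * ((2*j+1) * (2*j+2)))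
      = (Nat.choose m (j+1) * (j+1)) * (Nat.choose n (2*j) * ((2*j+1) * (2*j+2))) := by ring
    _ = (Nat.choose m j * (m - j)) * (Nat.choose n (2*j) * ((2*j+1) * (2*j+2))) := by rw [h1]
    _ = Nat.choose m j * Nat.choose n (2*j) * ((m - j) * ((2*j+1) * (2*j+2))) := by ring
    _ ≤ Nat.choose m j * Nat.choose n (2*j) * ((j+1) * ((n - (2*j+1)) * (n - 2*j))) := by
        apply Nat.mul_le_mul_left
        calc (m - j) * ((2*j+1) * (2*j+2)) = ((2 * (m-j)) * (2*j+1)) * (j+1) := by ring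
          _ ≤ ((n - (2*j+1)) * (n - 2*j)) * (j+1) := Nat.mul_le_mul_right _ hkey
          _ = (j+1) * ((n - (2*j+1)) * (n - 2*j)) := by ring
    _ = (Nat.choose n (2*j) * (n - 2*j)) * ((n - (2*j+1))) * (Nat.choose m j * (j+1)) := by ring
    _ = (Nat.choose n (2*j+1) * (2*j+1)) * ((n - (2*j+1))) * (Nat.choose m j * (j+1)) := by rw [h2]
    _ = (Nat.choose n (2*j+1) * (n - (2*j+1))) * ((2*j+1)) * (Nat.choose m j * (j+1)) := by ring
    _ = (Nat.choose n (2*j+2) * (2*j+2)) * ((2*j+1)) * (Nat.choose m j * (j+1)) := by rw [h3]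
    _ = Nat.choose m j * Nat.choose n (2*j+2) * ((j+1) * ((2*j+1) * (2*j+2))) := by ring

lemma ratio_le {n m c j : ℕ} (hmn : 4 * m ≤ n) (hm : 0 < m) (hj : 2*c ≤ j) :
    (Nat.choose m j : ℝ) / (Nat.choose n (2*j)) ≤
      (Nat.choose m (2*c) : ℝ) / (Nat.choose n (4*c)) := by
  obtain ⟨k, rfl⟩ : ∃ k, j = 2*c + k := ⟨j - 2*c, by omega⟩
  clear hj
  induction k with
  | zero =>
    have h4 : 4*c = 2*(2*c+0) := by ring
    rw [h4]
    norm_num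
  | succ k ih =>
    rcases lt_or_ge (2*c+k) m with hlt | hge
    · refine le_trans ?_ ih
      have hd1 : 0 < (Nat.choose n (2*(2*c+k)) : ℝ) := by
        have : 2*(2*c+k) ≤ n := by omega
        exact_mod_cast Nat.cast_pos.mpr (Nat.choose_pos this)
      have hd2 : 0 < (Nat.choose n (2*(2*c+(k+1))) : ℝ) := by
        have : 2*(2*c+(k+1)) ≤ n := by omega
        exact_mod_cast Nat.cast_pos.mpr (Nat.choose_pos this)
      rw [div_le_div_iff₀ hd2 hd1]
      have h := mono_step hlt hmn
      have e1 : 2*(2*c+(k+1)) = 2*(2*c+k)+2 := by ring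
      rw [e1]
      have e2 : 2*c+(k+1) = (2*c+k)+1 := by ring
      rw [e2]
      exact_mod_cast h
    · have hz : m < 2*c+(k+1) := by omega
      rw [Nat.choose_eq_zero_of_lt hz]
      simp only [Nat.cast_zero, zero_div]
      positivity

lemma pow_self_le_exp_factorial : ∀ k : ℕ, (k:ℝ)^k ≤ Real.exp 1 ^ k * (Nat.factorial k) := by
  intro k
  induction k with
  | zero => simp
  | succ k ih =>
    rcases Nat.eq_zero_or_pos k with rfl | hk
    · norm_num [Nat.factorial]
    · have hkR : (0:ℝ) < k := by exact_mod_cast hk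
      have h1 : ((k:ℝ)+1) ≤ k * Real.exp (1/k) := by
        calc ((k:ℝ)+1) = k * (1 + 1/k) := by field_simp
          _ ≤ k * Real.exp (1/k) := by
              apply mul_le_mul_of_nonneg_left _ (le_of_lt hkR)
              linarith [Real.add_one_le_exp (1/(k:ℝ))]
      have h2 : ((k:ℝ)+1)^k ≤ (k:ℝ)^k * Real.exp 1 := by
        calc ((k:ℝ)+1)^k ≤ (k * Real.exp (1/k))^k := by
              apply pow_le_pow_left₀ (by positivity) h1
          _ = (k:ℝ)^k * Real.exp (1/k) ^ k := mul_pow _ _ _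
          _ = (k:ℝ)^k * Real.exp 1 := by
              rw [← Real.exp_nat_mul]
              congr 1
              field_simp
      calc ((k+1:ℕ):ℝ)^(k+1) = ((k:ℝ)+1)^k * ((k:ℝ)+1) := by push_cast; ring
        _ ≤ ((k:ℝ)^k * Real.exp 1) * ((k:ℝ)+1) := by
            apply mul_le_mul_of_nonneg_right h2 (by positivity)
        _ ≤ (Real.exp 1 ^ k * (Nat.factorial k) * Real.exp 1) * ((k:ℝ)+1) := by
            have := Real.exp_pos 1
            apply mul_le_mul_of_nonneg_right _ (by positivity)
            apply mul_le_mul_of_nonneg_right ih (by positivity)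
        _ = Real.exp 1 ^ (k+1) * (((k:ℝ)+1) * Nat.factorial k) := by ring
        _ = Real.exp 1 ^ (k+1) * (Nat.factorial (k+1)) := by
            rw [Nat.factorial_succ]
            push_cast
            ring

lemma choose_upper {m k : ℕ} (hk : 0 < k) :
    (Nat.choose m k : ℝ) ≤ (Real.exp 1 * m / k) ^ k := by
  have h1 : (Nat.choose m k : ℝ) ≤ (m:ℝ)^k / (Nat.factorial k) := by
    have := Nat.choose_le_pow_div (α := ℝ) k m
    simpa using this
  refine h1.trans ?_
  rw [div_le_iff₀ (by positivity)]
  have hkk := pow_self_le_exp_factorial k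
  have hkR : (0:ℝ) < k := by exact_mod_cast hk
  calc (m:ℝ)^k = ((m:ℝ)^k * (k:ℝ)^k) / (k:ℝ)^k := by field_simp
    _ ≤ ((m:ℝ)^k * (Real.exp 1 ^ k * (Nat.factorial k))) / (k:ℝ)^k := by
        gcongr
    _ = (Real.exp 1 * m / k)^k * (Nat.factorial k) := by
        rw [div_pow, mul_pow]
        field_simp

lemma choose_lower {n k : ℕ} (hk : 0 < k) (hkn : k ≤ n) :
    ((n:ℝ) / k) ^ k ≤ (Nat.choose n k : ℝ) := by
  have hfac : (0:ℝ) < (Nat.factorial k : ℝ) := by exact_mod_cast Nat.factorial_pos k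
  rw [← mul_le_mul_iff_of_pos_right hfac]
  have hC : (Nat.choose n k : ℝ) * (Nat.factorial k) = ∏ i ∈ range k, ((n - i : ℕ) : ℝ) := by
    rw [← Nat.cast_mul, mul_comm, ← Nat.descFactorial_eq_factorial_mul_choose,
      Nat.descFactorial_eq_prod_range, Nat.cast_prod]
  have hfac2 : ((Nat.factorial k : ℕ) : ℝ) = ∏ i ∈ range k, ((k - i : ℕ) : ℝ) := by
    rw [← Nat.cast_prod, ← Nat.descFactorial_eq_prod_range, Nat.descFactorial_self]
  rw [hC, hfac2]
  have hpow : ((n:ℝ)/k)^k = ∏ _i ∈ range k, ((n:ℝ)/k) := by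
    rw [Finset.prod_const, Finset.card_range]
  rw [hpow, ← Finset.prod_mul_distrib]
  apply Finset.prod_le_prod
  · intro i hi
    positivity
  · intro i hi
    have hik : i < k := Finset.mem_range.mp hi
    have hin : i < n := lt_of_lt_of_le hik hkn
    rw [Nat.cast_sub (le_of_lt hik), Nat.cast_sub (le_of_lt hin)]
    have hkR : (0:ℝ) < k := by exact_mod_cast hk
    rw [div_mul_eq_mul_div, div_le_iff₀ hkR]
    have h1 : (i:ℝ) * k ≤ i * n := by
      apply mul_le_mul_of_nonneg_left _ (by positivity)
      exact_mod_cast hkn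
    nlinarith

/-- Tail part of the main estimate: for a sufficiently small universal constant `γ > 0`,
`(2^{2n}/|A|²) ∑_{even k=4c}^{2αn} (C(αn,k/2)/C(n,k)) ∑_{|v|=k} f̂(v)²
  ≤ 2^c·C(αn,2c)/C(n,4c) ≤ (8√2·e·α·c/n)^{2c} ≤ ε²/2`
(writing `k = 2j`, `m = αn`, `α = m/n`). -/
theorem tail_sum_bound :
    ∃ γ : ℝ, 0 < γ ∧
      ∀ (n m c : ℕ) (ε : ℝ) (A : Finset (Fin n → ZMod 2))
        (f : (Fin n → ZMod 2) → ℝ),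
        0 < m → 4 * m ≤ n → 1 ≤ c →
        (2 : ℝ) ^ (n : ℝ) / (2 : ℝ) ^ (c : ℝ) ≤ (A.card : ℝ) →
        0 < ε → ε ≤ 1 →
        (c : ℝ) ≤ γ * ε * Real.sqrt ((n : ℝ) / ((m : ℝ) / (n : ℝ))) →
        (∀ x, f x = if x ∈ A then 1 else 0) →
        ((2 : ℝ) ^ (2 * n) / (A.card : ℝ) ^ 2 *
            ∑ j ∈ Finset.Icc (2 * c) m,
              ((Nat.choose m j : ℝ) / (Nat.choose n (2 * j) : ℝ)) *
                ∑ v ∈ Finset.univ.filter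
                    (fun v : Fin n → ZMod 2 =>
                      (Finset.univ.filter fun i => v i ≠ 0).card = 2 * j),
                  (boolFourier f v) ^ 2
          ≤ (2 : ℝ) ^ c * ((Nat.choose m (2 * c) : ℝ) / (Nat.choose n (4 * c) : ℝ)))
        ∧ ((2 : ℝ) ^ c * ((Nat.choose m (2 * c) : ℝ) / (Nat.choose n (4 * c) : ℝ))
          ≤ (8 * Real.sqrt 2 * Real.exp 1 * ((m : ℝ) / (n : ℝ)) * (c : ℝ) / (n : ℝ)) ^ (2 * c))
        ∧ ((8 * Real.sqrt 2 * Real.exp 1 * ((m : ℝ) / (n : ℝ)) * (c : ℝ) / (n : ℝ)) ^ (2 * c)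
          ≤ ε ^ 2 / 2) := by
  refine ⟨1/200, by norm_num, ?_⟩
  intro n m c ε A f hm hmn hc hA hε hε1 hγc hf
  have hn : 0 < n := by omega
  have hnR : (0:ℝ) < n := by exact_mod_cast hn
  have hmR : (0:ℝ) < m := by exact_mod_cast hm
  have hcR : (0:ℝ) < c := by exact_mod_cast hc
  have hsm1 : (1:ℝ) ≤ Real.sqrt m := by
    rw [show (1:ℝ) = Real.sqrt 1 by simp]
    exact Real.sqrt_le_sqrt (by exact_mod_cast hm)
  have hsqrt : Real.sqrt ((n : ℝ) / ((m : ℝ) / (n : ℝ))) = n / Real.sqrt m := by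
    have h1 : (n : ℝ) / ((m : ℝ) / (n : ℝ)) = (n:ℝ)^2 / m := by
      field_simp
    rw [h1, Real.sqrt_div (by positivity), Real.sqrt_sq (le_of_lt hnR)]
  rw [hsqrt] at hγc
  -- key consequence: c * sqrt m ≤ ε * n / 200
  have hkey : (c:ℝ) * Real.sqrt m ≤ ε * n / 200 := by
    have hsm : (0:ℝ) < Real.sqrt m := lt_of_lt_of_le one_pos hsm1
    have := mul_le_mul_of_nonneg_right hγc (le_of_lt hsm)
    calc (c:ℝ) * Real.sqrt m ≤ 1/200 * ε * ((n:ℝ) / Real.sqrt m) * Real.sqrt m := this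
      _ = ε * n / 200 := by field_simp
  have hcn : (c:ℝ) ≤ (n:ℝ)/200 := by
    calc (c:ℝ) = c * 1 := by ring
      _ ≤ c * Real.sqrt m := by
          apply mul_le_mul_of_nonneg_left hsm1 (le_of_lt hcR)
      _ ≤ ε * n / 200 := hkey
      _ ≤ 1 * n / 200 := by
          apply div_le_div_of_nonneg_right _ (by norm_num)
          apply mul_le_mul_of_nonneg_right hε1 (le_of_lt hnR)
      _ = n/200 := by ring
  have h4c : 4 * c ≤ n := by
    have : (4 * c : ℝ) ≤ n := by push_cast; linarith
    exact_mod_cast this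
  -- constants
  have hs2 : Real.sqrt 2 ≤ 2 := by
    have h := Real.sqrt_le_sqrt (by norm_num : (2:ℝ) ≤ 4)
    rwa [show (4:ℝ) = 2^2 by norm_num, Real.sqrt_sq (by norm_num : (0:ℝ) ≤ 2)] at h
  have hs2' : (0:ℝ) ≤ Real.sqrt 2 := Real.sqrt_nonneg 2
  have he3 : Real.exp 1 ≤ 3 := by
    have := Real.exp_one_lt_d9
    linarith
  have hepos : (0:ℝ) < Real.exp 1 := Real.exp_pos 1
  set base : ℝ := 8 * Real.sqrt 2 * Real.exp 1 * ((m : ℝ) / (n : ℝ)) * (c : ℝ) / (n : ℝ) with hbase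
  have hbase0 : 0 ≤ base := by positivity
  -- Part 3
  have hsmn : Real.sqrt m ≤ n := by
    calc Real.sqrt m ≤ Real.sqrt n := Real.sqrt_le_sqrt (by exact_mod_cast by omega)
      _ ≤ n := by
          nlinarith [Real.sq_sqrt (le_of_lt hnR), Real.sqrt_nonneg (n:ℝ),
            (by exact_mod_cast hn : (1:ℝ) ≤ n)]
  have hbase_half : base ≤ ε / 2 := by
    have hb2 : base = (8 * Real.sqrt 2 * Real.exp 1 * m * c) / ((n:ℝ) * n) := by
      rw [hbase]; field_simp
    rw [hb2, div_le_iff₀ (by positivity)]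
    have hmm : (m:ℝ) = Real.sqrt m * Real.sqrt m := (Real.mul_self_sqrt (by positivity)).symm
    have h8 : 8 * Real.sqrt 2 * Real.exp 1 ≤ 48 := by nlinarith
    calc 8 * Real.sqrt 2 * Real.exp 1 * m * c
        = (8 * Real.sqrt 2 * Real.exp 1) * (Real.sqrt m * (c * Real.sqrt m)) := by
          conv_lhs => rw [hmm]
          ring
      _ ≤ 48 * (Real.sqrt m * (c * Real.sqrt m)) := by
          apply mul_le_mul_of_nonneg_right h8
          positivity
      _ ≤ 48 * (Real.sqrt m * (ε * n / 200)) := by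
          apply mul_le_mul_of_nonneg_left _ (by norm_num)
          apply mul_le_mul_of_nonneg_left hkey (Real.sqrt_nonneg _)
      _ ≤ 48 * ((n:ℝ) * (ε * n / 200)) := by
          apply mul_le_mul_of_nonneg_left _ (by norm_num)
          apply mul_le_mul_of_nonneg_right hsmn
          positivity
      _ = (48/200) * (ε * (n * n)) := by ring
      _ ≤ (1/2) * (ε * (n * n)) := by
          apply mul_le_mul_of_nonneg_right _ (by positivity)
          norm_num
      _ = ε / 2 * (n * n) := by ring
  have part3 : base ^ (2*c) ≤ ε^2/2 := by
    calc base ^ (2*c) ≤ (ε/2) ^ (2*c) := pow_le_pow_left₀ hbase0 hbase_half _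
      _ ≤ (ε/2) ^ 2 := by
          apply pow_le_pow_of_le_one (by positivity) (by linarith) (by omega)
      _ = ε^2/4 := by ring
      _ ≤ ε^2/2 := by nlinarith [sq_nonneg ε]
  -- Part 2
  have hC4 : (0:ℝ) < Nat.choose n (4*c) := by
    exact_mod_cast Nat.cast_pos.mpr (Nat.choose_pos h4c)
  have part2 : (2 : ℝ) ^ c * ((Nat.choose m (2 * c) : ℝ) / (Nat.choose n (4 * c) : ℝ))
      ≤ base ^ (2 * c) := by
    rw [← mul_div_assoc, div_le_iff₀ hC4]
    have h2c : (2:ℝ)^c = Real.sqrt 2 ^ (2*c) := by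
      rw [pow_mul, Real.sq_sqrt (by norm_num : (0:ℝ) ≤ 2)]
    have hup := choose_upper (m := m) (k := 2*c) (by omega)
    have hlo := choose_lower (n := n) (k := 4*c) (by omega) h4c
    have hbb : Real.sqrt 2 * (Real.exp 1 * (m:ℝ) / ((2*c : ℕ):ℝ))
        = base * ((n:ℝ) / ((4*c : ℕ):ℝ))^2 := by
      rw [hbase]
      push_cast
      field_simp
      ring
    calc (2:ℝ)^c * (Nat.choose m (2*c) : ℝ)
        ≤ (2:ℝ)^c * (Real.exp 1 * (m:ℝ) / ((2*c : ℕ):ℝ)) ^ (2*c) := by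
          apply mul_le_mul_of_nonneg_left hup (by positivity)
      _ = (Real.sqrt 2 * (Real.exp 1 * (m:ℝ) / ((2*c : ℕ):ℝ))) ^ (2*c) := by
          rw [mul_pow, h2c]
      _ = (base * ((n:ℝ) / ((4*c : ℕ):ℝ))^2) ^ (2*c) := by rw [hbb]
      _ = base ^ (2*c) * ((n:ℝ) / ((4*c : ℕ):ℝ)) ^ (4*c) := by
          rw [mul_pow, ← pow_mul]
          congr 2
          ring
      _ ≤ base ^ (2*c) * (Nat.choose n (4*c) : ℝ) := by
          apply mul_le_mul_of_nonneg_left hlo (by positivity)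
  -- Part 1
  have hA' : (2:ℝ)^n / (2:ℝ)^c ≤ (A.card : ℝ) := by
    rw [← Real.rpow_natCast (2:ℝ) n, ← Real.rpow_natCast (2:ℝ) c]
    exact hA
  have hApos : (0:ℝ) < (A.card : ℝ) := lt_of_lt_of_le (by positivity) hA'
  have h2na : (2:ℝ)^n / (A.card : ℝ) ≤ (2:ℝ)^c := by
    rw [div_le_iff₀ hApos]
    rw [div_le_iff₀ (by positivity : (0:ℝ) < (2:ℝ)^c)] at hA'
    linarith
  have hsumf : ∑ x : Fin n → ZMod 2, (f x)^2 = (A.card : ℝ) := by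
    have h1 : ∀ x, (f x)^2 = if x ∈ A then (1:ℝ) else 0 := by
      intro x; rw [hf]; split_ifs <;> norm_num
    simp_rw [h1]
    rw [Finset.sum_ite_mem, Finset.univ_inter, Finset.sum_const, nsmul_eq_mul, mul_one]
  have hPar : ∑ v : Fin n → ZMod 2, (boolFourier f v)^2 = ((2:ℝ)^n)⁻¹ * (A.card : ℝ) := by
    rw [parseval, hsumf]
  set S : ℕ → ℝ := fun j => ∑ v ∈ Finset.univ.filter
      (fun v : Fin n → ZMod 2 =>
        (Finset.univ.filter fun i => v i ≠ 0).card = 2 * j), (boolFourier f v) ^ 2 with hS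
  have hSnonneg : ∀ j, 0 ≤ S j := by
    intro j; apply Finset.sum_nonneg; intro v _; exact sq_nonneg _
  have hT : ∑ j ∈ Finset.Icc (2*c) m, S j ≤ ((2:ℝ)^n)⁻¹ * (A.card : ℝ) := by
    rw [← hPar]
    have hdisj : ∀ j ∈ Finset.Icc (2*c) m, ∀ j' ∈ Finset.Icc (2*c) m, j ≠ j' →
        Disjoint (Finset.univ.filter (fun v : Fin n → ZMod 2 =>
            (Finset.univ.filter fun i => v i ≠ 0).card = 2 * j))
          (Finset.univ.filter (fun v : Fin n → ZMod 2 =>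
            (Finset.univ.filter fun i => v i ≠ 0).card = 2 * j')) := by
      intro j _ j' _ hjj'
      rw [Finset.disjoint_left]
      intro v hv hv'
      rw [Finset.mem_filter] at hv hv'
      omega
    rw [show ∑ j ∈ Finset.Icc (2*c) m, S j
        = ∑ v ∈ (Finset.Icc (2*c) m).biUnion (fun j => Finset.univ.filter
            (fun v : Fin n → ZMod 2 =>
              (Finset.univ.filter fun i => v i ≠ 0).card = 2 * j)), (boolFourier f v)^2 from
      (Finset.sum_biUnion hdisj).symm]
    apply Finset.sum_le_sum_of_subset_of_nonneg (Finset.subset_univ _)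
    intro v _ _
    exact sq_nonneg _
  have hr2c : (0:ℝ) ≤ (Nat.choose m (2*c) : ℝ) / (Nat.choose n (4*c) : ℝ) :=
    div_nonneg (Nat.cast_nonneg _) (Nat.cast_nonneg _)
  refine ⟨?_, part2, part3⟩
  calc (2 : ℝ) ^ (2 * n) / (A.card : ℝ) ^ 2 *
        ∑ j ∈ Finset.Icc (2 * c) m,
          ((Nat.choose m j : ℝ) / (Nat.choose n (2 * j) : ℝ)) * S j
      ≤ (2 : ℝ) ^ (2 * n) / (A.card : ℝ) ^ 2 *
        ∑ j ∈ Finset.Icc (2 * c) m,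
          ((Nat.choose m (2*c) : ℝ) / (Nat.choose n (4*c) : ℝ)) * S j := by
        apply mul_le_mul_of_nonneg_left _ (by positivity)
        apply Finset.sum_le_sum
        intro j hj
        have h2cj : 2*c ≤ j := (Finset.mem_Icc.mp hj).1
        exact mul_le_mul_of_nonneg_right (ratio_le hmn hm h2cj) (hSnonneg j)
    _ = (2 : ℝ) ^ (2 * n) / (A.card : ℝ) ^ 2 *
        (((Nat.choose m (2*c) : ℝ) / (Nat.choose n (4*c) : ℝ)) *
          ∑ j ∈ Finset.Icc (2 * c) m, S j) := by
        congr 1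
        exact (Finset.mul_sum _ _ _).symm
    _ ≤ (2 : ℝ) ^ (2 * n) / (A.card : ℝ) ^ 2 *
        (((Nat.choose m (2*c) : ℝ) / (Nat.choose n (4*c) : ℝ)) *
          (((2:ℝ)^n)⁻¹ * (A.card : ℝ))) := by
        apply mul_le_mul_of_nonneg_left _ (by positivity)
        exact mul_le_mul_of_nonneg_left hT hr2c
    _ = ((2:ℝ)^n / (A.card : ℝ)) *
          ((Nat.choose m (2*c) : ℝ) / (Nat.choose n (4*c) : ℝ)) := by
        have h2n2 : (2:ℝ)^(2*n) = ((2:ℝ)^n)^2 := by rw [mul_comm, pow_mul]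
        rw [h2n2]
        field_simp
    _ ≤ (2:ℝ)^c * ((Nat.choose m (2*c) : ℝ) / (Nat.choose n (4*c) : ℝ)) := by
        exact mul_le_mul_of_nonneg_right h2na hr2c
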